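/- There is no positive function c(β) on (0,∞) such that μ_β = c(β) μ₁ for all β; i.e., the cone metrics μ_β on the sphere, all having the same cone points and cone angles, are not all scalar multiples of one another. -/

import Mathlib

/-- There is no positive function `c(β)` on `(0, ∞)` such that
`μ_β = c(β) μ₁` for all `β > 0`, where
`μ_β = |((z+1)/(z-1))((z+2)/(z-2)) e^{βz} dz|`: the cone metrics `μ_β` on the sphere,
all having the same cone points and cone angles, are not all scalar multiples of one
another. -/
theorem stmt_7 :
    ¬ ∃ c : ℝ → ℝ, (∀ β : ℝ, 0 < β → 0 < c β) ∧
      ∀ β : ℝ, 0 < β → ∀ z : ℂ, z ≠ 1 → z ≠ -1 → z ≠ 2 → z ≠ -2 →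
        ‖(z + 1) / (z - 1) * ((z + 2) / (z - 2)) * Complex.exp ((β : ℂ) * z)‖ =
          c β * ‖(z + 1) / (z - 1) * ((z + 2) / (z - 2)) * Complex.exp ((1 : ℂ) * z)‖ := by
  rintro ⟨c, hc, h⟩
  have h0 := h 2 (by norm_num) 0 (by norm_num) (by norm_num) (by norm_num) (by norm_num)
  have h3 := h 2 (by norm_num) 3 (by norm_num) (by norm_num) (by norm_num) (by norm_num)
  norm_num [Complex.norm_exp] at h0 h3
  rw [← h0, one_mul] at h3
  norm_num at h3
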